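/- Let A be a monoidal category and let (T, K, v, v₀, k) be a skew left warping of A. Then the following data define a left skew-monoidal structure on the underlying category of A: tensor product A∗B = TA⊗B; unit object K; associativity constraint α*_{A,B,C} = α_{TA,TB,C}∘(v_{A,B}⊗1_C) : T(TA⊗B)⊗C → TA⊗(TB⊗C); left unit constraint λ*_B = λ_B∘(v₀⊗1_B) : TK⊗B → B; right unit constraint ρ*_A = k_A : A → TA⊗K. That is, (∗, K, α*, λ*, ρ*) satisfies the five left skew-monoidal axioms. -/

import Mathlib

open CategoryTheory MonoidalCategory

variable {V : Type*} [Category V] [MonoidalCategory V]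

/-- A skew left warping of the monoidal category `V` (Lack–Street, following Booker–Street):
a functor `T`, an object `K`, natural families `v_{X,Y} : T(TX ⊗ Y) ⟶ TX ⊗ TY` and
`k_X : X ⟶ TX ⊗ K`, and a morphism `v₀ : TK ⟶ I`, satisfying the five warping axioms
(W1)–(W5). -/
def IsSkewLeftWarping (T : V ⥤ V) (K : V)
    (v : ∀ X Y : V, T.obj (T.obj X ⊗ Y) ⟶ T.obj X ⊗ T.obj Y)
    (v₀ : T.obj K ⟶ 𝟙_ V) (k : ∀ X : V, X ⟶ T.obj X ⊗ K) : Prop :=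
  -- naturality of v
  (∀ (X X' Y Y' : V) (f : X ⟶ X') (g : Y ⟶ Y'),
    T.map (T.map f ⊗ₘ g) ≫ v X' Y' = v X Y ≫ (T.map f ⊗ₘ T.map g)) ∧
  -- naturality of k
  (∀ (X X' : V) (f : X ⟶ X'), f ≫ k X' = k X ≫ (T.map f ▷ K)) ∧
  -- (W1)
  (∀ X Y Z : V,
    v (T.obj X ⊗ Y) Z ≫ (v X Y ▷ T.obj Z) ≫ (α_ (T.obj X) (T.obj Y) (T.obj Z)).hom =
      T.map (v X Y ▷ Z) ≫ T.map (α_ (T.obj X) (T.obj Y) Z).hom ≫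
        v X (T.obj Y ⊗ Z) ≫ (T.obj X ◁ v Y Z)) ∧
  -- (W2)
  (∀ Y : V,
    v K Y ≫ (v₀ ▷ T.obj Y) ≫ (λ_ (T.obj Y)).hom =
      T.map (v₀ ▷ Y) ≫ T.map (λ_ Y).hom) ∧
  -- (W3)
  (∀ X : V, T.map (k X) ≫ v X K ≫ (T.obj X ◁ v₀) = (ρ_ (T.obj X)).inv) ∧
  -- (W4)
  (∀ X Y : V,
    k (T.obj X ⊗ Y) ≫ (v X Y ▷ K) ≫ (α_ (T.obj X) (T.obj Y) K).hom =
      T.obj X ◁ k Y) ∧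
  -- (W5)
  (k K ≫ (v₀ ▷ K) ≫ (λ_ K).hom = 𝟙 K)

/-- The associativity constraint `α*_{X,Y,Z} = α_{TX,TY,Z} ∘ (v_{X,Y} ⊗ 1_Z)` of the
skew tensor `X ∗ Y = TX ⊗ Y` induced by a skew left warping. -/
def warpAssoc (T : V ⥤ V)
    (v : ∀ X Y : V, T.obj (T.obj X ⊗ Y) ⟶ T.obj X ⊗ T.obj Y) (X Y Z : V) :
    T.obj (T.obj X ⊗ Y) ⊗ Z ⟶ T.obj X ⊗ (T.obj Y ⊗ Z) :=
  (v X Y ▷ Z) ≫ (α_ (T.obj X) (T.obj Y) Z).hom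

/-- A skew left warping `(T, K, v, v₀, k)` of a monoidal category `V`
determines a left skew-monoidal structure on `V` with tensor `X ∗ Y = TX ⊗ Y`, unit `K`,
associativity `α* = α ∘ (v ⊗ 1)`, left unit `λ* = λ ∘ (v₀ ⊗ 1)` and right unit `ρ* = k`:
the five left skew-monoidal axioms hold. -/
theorem skew_left_warping_gives_skew_monoidal (T : V ⥤ V) (K : V)
    (v : ∀ X Y : V, T.obj (T.obj X ⊗ Y) ⟶ T.obj X ⊗ T.obj Y)
    (v₀ : T.obj K ⟶ 𝟙_ V) (k : ∀ X : V, X ⟶ T.obj X ⊗ K)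
    (h : IsSkewLeftWarping T K v v₀ k) :
    -- (1) pentagon
    (∀ X Y Z W : V,
      (T.map (warpAssoc T v X Y Z) ▷ W) ≫ warpAssoc T v X (T.obj Y ⊗ Z) W ≫
          (T.obj X ◁ warpAssoc T v Y Z W) =
        warpAssoc T v (T.obj X ⊗ Y) Z W ≫ warpAssoc T v X Y (T.obj Z ⊗ W)) ∧
    -- (2)
    (∀ X Y : V,
      (T.map (k X) ▷ Y) ≫ warpAssoc T v X K Y ≫
          (T.obj X ◁ ((v₀ ▷ Y) ≫ (λ_ Y).hom)) = 𝟙 (T.obj X ⊗ Y)) ∧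
    -- (3)
    (∀ X Y : V,
      warpAssoc T v K X Y ≫ (v₀ ▷ (T.obj X ⊗ Y)) ≫ (λ_ (T.obj X ⊗ Y)).hom =
        T.map ((v₀ ▷ X) ≫ (λ_ X).hom) ▷ Y) ∧
    -- (4)
    (∀ X Y : V,
      k (T.obj X ⊗ Y) ≫ warpAssoc T v X Y K = T.obj X ◁ k Y) ∧
    -- (5)
    (k K ≫ (v₀ ▷ K) ≫ (λ_ K).hom = 𝟙 K) := by
  obtain ⟨nv, nk, W1, W2, W3, W4, W5⟩ := h
  refine ⟨?_, ?_, ?_, ?_, W5⟩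
  · intro X Y Z W
    simp only [warpAssoc, Functor.map_comp, comp_whiskerRight,
      MonoidalCategory.whiskerLeft_comp, Category.assoc]
    slice_lhs 4 5 => rw [← associator_naturality_middle]
    slice_lhs 1 4 => rw [← comp_whiskerRight, ← comp_whiskerRight, ← comp_whiskerRight, ← W1,
      comp_whiskerRight, comp_whiskerRight]
    slice_rhs 2 3 => rw [← associator_naturality_left]
    simp only [Category.assoc, pentagon]
  · intro X Y
    simp only [warpAssoc, MonoidalCategory.whiskerLeft_comp, Category.assoc]
    slice_lhs 3 4 => rw [← associator_naturality_middle]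
    slice_lhs 4 5 => rw [triangle]
    slice_lhs 1 3 => rw [← comp_whiskerRight, ← comp_whiskerRight, W3]
    rw [← comp_whiskerRight, Iso.inv_hom_id, id_whiskerRight]
  · intro X Y
    simp only [warpAssoc, Category.assoc]
    rw [← associator_naturality_left_assoc, leftUnitor_tensor_hom]
    simp only [Category.assoc, Iso.hom_inv_id_assoc]
    rw [← comp_whiskerRight, ← comp_whiskerRight, W2, Functor.map_comp, comp_whiskerRight]
  · intro X Y
    simpa only [warpAssoc, Category.assoc] using W4 X Y
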